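/- Let G = G(c) be a Gc-group with generators α, β, and let J = ⟨β^{α^i} : i ∈ ℤ⟩. Then G is the internal semidirect product J ⋊ ⟨α⟩ (i.e., J is normal in G, J ∩ ⟨α⟩ = 1, and J·⟨α⟩ = G), and J is isomorphic to the abelian group presented (as an abelian group) by generators β_i (i ∈ ℤ) subject to the relations Σ_{i=0}^{s} c_i β_{k+i} = 0 for all k ∈ ℤ. -/

import Mathlib

open scoped commutatorElement in
/-- The defining relators of the Gc-group `G(c)`: with `α` the image of `0 : Fin 2` and
`β` the image of `1 : Fin 2`, the relators are `⁅β, β^(α^i)⁆` for all `i : ℤ` together with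
`β^(c 0) * (β^α)^(c 1) * ⋯ * (β^(α^s))^(c s)`, where `x^y = y⁻¹ * x * y`. -/
def gcRels (s : ℕ) (c : Fin (s + 1) → ℤ) : Set (FreeGroup (Fin 2)) :=
  (Set.range fun i : ℤ =>
    ⁅FreeGroup.of (1 : Fin 2),
      (FreeGroup.of (0 : Fin 2)) ^ (-i) * FreeGroup.of (1 : Fin 2) * (FreeGroup.of (0 : Fin 2)) ^ i⁆) ∪
  {((List.finRange (s + 1)).map fun i : Fin (s + 1) =>
      ((FreeGroup.of (0 : Fin 2)) ^ (-(i : ℤ)) * FreeGroup.of (1 : Fin 2) *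
        (FreeGroup.of (0 : Fin 2)) ^ (i : ℤ)) ^ (c i)).prod}

/-- The Gc-group `G(c)`, given by the presentation `⟨α, β ∣ ℛ_c⟩`. -/
abbrev GcGroup (s : ℕ) (c : Fin (s + 1) → ℤ) : Type := PresentedGroup (gcRels s c)

/-- The conditions on the vector `c = (c 0, …, c s)` in the definition of a Gc-group:
`s ≥ 1`, `c 0 ≠ 0`, `c s ≠ 0` and `gcd (c 0, …, c s) = 1`. -/
def IsGcVec (s : ℕ) (c : Fin (s + 1) → ℤ) : Prop :=
  1 ≤ s ∧ c 0 ≠ 0 ∧ c (Fin.last s) ≠ 0 ∧ Finset.gcd Finset.univ c = 1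

namespace GcAux
open Finsupp AddSubgroup Multiplicative SemidirectProduct

variable (s : ℕ) (c : Fin (s + 1) → ℤ)

noncomputable def relFun (k : ℤ) : ℤ →₀ ℤ :=
  ∑ i : Fin (s + 1), c i • Finsupp.single (k + (i : ℤ)) (1 : ℤ)

noncomputable def R : AddSubgroup (ℤ →₀ ℤ) := AddSubgroup.closure (Set.range (relFun s c))

abbrev A := (ℤ →₀ ℤ) ⧸ R s c

noncomputable def mkA : (ℤ →₀ ℤ) →+ A s c := QuotientAddGroup.mk' (R s c)

def shiftF (n : ℤ) : (ℤ →₀ ℤ) ≃+ (ℤ →₀ ℤ) := Finsupp.domCongr (Equiv.subRight n)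

@[simp] lemma shiftF_single (n k m : ℤ) :
    shiftF n (Finsupp.single k m) = Finsupp.single (k - n) m := by
  rw [shiftF, Finsupp.domCongr_apply, Finsupp.equivMapDomain_single, Equiv.subRight_apply]

lemma shiftF_relFun (n k : ℤ) : shiftF n (relFun s c k) = relFun s c (k - n) := by
  rw [relFun, map_sum]
  refine Finset.sum_congr rfl fun i _ => ?_
  rw [map_zsmul, shiftF_single]
  congr 2
  ring

lemma map_R (n : ℤ) : (R s c).map (shiftF n).toAddMonoidHom = R s c := by
  rw [R, AddMonoidHom.map_closure]
  congr 1
  ext x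
  constructor
  · rintro ⟨y, ⟨k, rfl⟩, rfl⟩
    exact ⟨k - n, (shiftF_relFun s c n k).symm⟩
  · rintro ⟨k, rfl⟩
    exact ⟨relFun s c (k + n), ⟨k + n, rfl⟩, by rw [AddEquiv.coe_toAddMonoidHom, shiftF_relFun]; congr 1; ring⟩

noncomputable def shiftQ (n : ℤ) : A s c ≃+ A s c :=
  QuotientAddGroup.congr (R s c) (R s c) (shiftF n) (map_R s c n)

@[simp] lemma shiftQ_mk (n : ℤ) (x : ℤ →₀ ℤ) :
    shiftQ s c n (mkA s c x) = mkA s c (shiftF n x) :=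
  rfl

noncomputable def phi : Multiplicative ℤ →* MulAut (Multiplicative (A s c)) :=
  MonoidHom.mk' (fun n => AddEquiv.toMultiplicative (shiftQ s c n.toAdd))
    (by
      intro a b
      ext x
      induction x using QuotientAddGroup.induction_on with
      | H x =>
        show (shiftQ s c (a.toAdd + b.toAdd) (mkA s c x) : A s c)
          = shiftQ s c a.toAdd (shiftQ s c b.toAdd (mkA s c x))
        simp only [shiftQ_mk]
        congr 1
        ext j
        simp [shiftF, Finsupp.domCongr_apply, Finsupp.equivMapDomain_apply]
        congr 1
        ring)

@[simp] lemma phi_apply_mk (n : ℤ) (x : ℤ →₀ ℤ) :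
    phi s c (ofAdd n) (ofAdd (mkA s c x)) = ofAdd (mkA s c (shiftF n x)) := by
  show AddEquiv.toMultiplicative (shiftQ s c n) (ofAdd (mkA s c x)) = _
  simp only [AddEquiv.toMultiplicative]
  rfl

/-- The model semidirect product. -/
abbrev SG := SemidirectProduct (Multiplicative (A s c)) (Multiplicative ℤ) (phi s c)

lemma ofAdd_one_zpow (i : ℤ) : (ofAdd (1 : ℤ)) ^ i = ofAdd i := by
  rw [← ofAdd_zsmul]; norm_num

noncomputable def fpi : Fin 2 → SG s c :=
  ![inr (ofAdd (1 : ℤ)), inl (ofAdd (mkA s c (Finsupp.single 0 1)))]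

lemma conj_inl (i : ℤ) (x : ℤ →₀ ℤ) :
    (inr (ofAdd (1 : ℤ)) : SG s c) ^ (-i) * inl (ofAdd (mkA s c x)) * (inr (ofAdd 1)) ^ i
      = inl (ofAdd (mkA s c (shiftF (-i) x))) := by
  have h1 : ((inr (ofAdd (1 : ℤ)) : SG s c)) ^ (-i) = inr (ofAdd (-i)) := by
    rw [← map_zpow, ofAdd_one_zpow]
  have h2 : ((inr (ofAdd (1 : ℤ)) : SG s c)) ^ i = inr ((ofAdd (-i))⁻¹) := by
    rw [← map_zpow, ofAdd_one_zpow]; congr 1; simp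
  rw [h1, h2, ← inl_aut (φ := phi s c) (ofAdd (-i)) (ofAdd (mkA s c x)), phi_apply_mk]

lemma lift_word (i : ℤ) :
    FreeGroup.lift (fpi s c)
      ((FreeGroup.of (0 : Fin 2)) ^ (-i) * FreeGroup.of (1 : Fin 2) * (FreeGroup.of (0 : Fin 2)) ^ i)
      = inl (ofAdd (mkA s c (Finsupp.single i 1))) := by
  have h0 : FreeGroup.lift (fpi s c) (FreeGroup.of (0 : Fin 2)) = inr (ofAdd (1 : ℤ)) := by
    rw [FreeGroup.lift_apply_of]; rfl
  have h1 : FreeGroup.lift (fpi s c) (FreeGroup.of (1 : Fin 2))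
      = inl (ofAdd (mkA s c (Finsupp.single 0 1))) := by
    rw [FreeGroup.lift_apply_of]; rfl
  rw [map_mul, map_mul, map_zpow, map_zpow, h0, h1, conj_inl]
  rw [shiftF_single]
  norm_num

lemma mkA_relFun (k : ℤ) : mkA s c (relFun s c k) = 0 :=
  (QuotientAddGroup.eq_zero_iff _).2 (AddSubgroup.subset_closure (Set.mem_range_self k))

lemma lift_prod (l : List (Fin (s + 1))) :
    FreeGroup.lift (fpi s c)
      ((l.map fun i : Fin (s + 1) =>
        ((FreeGroup.of (0 : Fin 2)) ^ (-(i : ℤ)) * FreeGroup.of (1 : Fin 2) *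
          (FreeGroup.of (0 : Fin 2)) ^ (i : ℤ)) ^ (c i)).prod)
      = inl (ofAdd (mkA s c (l.map fun i => c i • Finsupp.single ((i : ℤ)) (1 : ℤ)).sum)) := by
  induction l with
  | nil => simp
  | cons a l ih =>
    simp only [List.map_cons, Function.comp_apply, List.prod_cons, List.sum_cons]
    rw [map_mul, map_zpow, lift_word, ih, ← map_zpow, ← ofAdd_zsmul, ← map_zsmul (mkA s c), ← map_mul, ← ofAdd_add,
      ← map_add]

lemma rels_liftable : ∀ r ∈ gcRels s c, FreeGroup.lift (fpi s c) r = 1 := by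
  rintro r (⟨i, rfl⟩ | rfl)
  · rw [map_commutatorElement]
    have h1 := lift_word s c 0
    have h0 : (FreeGroup.of (0 : Fin 2)) ^ (-(0:ℤ)) * FreeGroup.of (1 : Fin 2) *
        (FreeGroup.of (0 : Fin 2)) ^ (0:ℤ) = FreeGroup.of (1 : Fin 2) := by
      simp
    rw [h0] at h1
    rw [h1, lift_word]
    exact commutatorElement_eq_one_iff_mul_comm.2 ((Commute.all _ _).map inl).eq
  · refine (lift_prod s c (List.finRange (s + 1))).trans ?_
    have : ((List.finRange (s+1)).map fun i => c i • Finsupp.single ((i : ℤ)) (1:ℤ)).sum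
        = relFun s c 0 := by
      rw [relFun, Fin.sum_univ_def]
      refine congrArg _ (List.map_congr_left fun i _ => ?_)
      norm_num
    rw [this, mkA_relFun]
    simp

/-- The homomorphism from the presented group to the model. -/
noncomputable def pi : GcGroup s c →* SG s c :=
  PresentedGroup.toGroup (rels_liftable s c)

/-- The generators. -/
noncomputable def ga : GcGroup s c := PresentedGroup.of 0
noncomputable def gb : GcGroup s c := PresentedGroup.of 1

/-- The conjugates `β^(α^i)`. -/
noncomputable def g (i : ℤ) : GcGroup s c := (ga s c) ^ (-i) * gb s c * (ga s c) ^ i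

lemma mk_rel_eq_one {r : FreeGroup (Fin 2)} (hr : r ∈ gcRels s c) :
    PresentedGroup.mk (gcRels s c) r = 1 :=
  (QuotientGroup.eq_one_iff r).mpr (Subgroup.subset_normalClosure hr)

lemma mk_word (i : ℤ) :
    PresentedGroup.mk (gcRels s c)
      ((FreeGroup.of (0 : Fin 2)) ^ (-i) * FreeGroup.of (1 : Fin 2) * (FreeGroup.of (0 : Fin 2)) ^ i)
      = g s c i := by
  rw [map_mul, map_mul, map_zpow, map_zpow]
  rfl

open scoped commutatorElement in
lemma relQ1 (i : ℤ) : ⁅gb s c, g s c i⁆ = 1 := by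
  have h := mk_rel_eq_one s c (Or.inl (Set.mem_range_self i))
  rwa [map_commutatorElement, mk_word] at h

lemma comm_b_g (i : ℤ) : gb s c * g s c i = g s c i * gb s c :=
  commutatorElement_eq_one_iff_mul_comm.1 (relQ1 s c i)

lemma conj_g (t i : ℤ) : (ga s c) ^ (-t) * g s c i * (ga s c) ^ t = g s c (i + t) := by
  simp only [g, neg_add, zpow_add]
  group

lemma comm_g (i j : ℤ) : g s c i * g s c j = g s c j * g s c i := by
  have hgj : g s c j = (ga s c) ^ (-i) * g s c (j - i) * (ga s c) ^ i := by
    rw [conj_g]; congr 1; ring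
  calc g s c i * g s c j
      = ((ga s c)^(-i) * gb s c * (ga s c)^i) * ((ga s c) ^ (-i) * g s c (j - i) * (ga s c) ^ i) := by
        rw [← hgj]; rfl
    _ = (ga s c)^(-i) * (gb s c * g s c (j - i)) * (ga s c)^i := by group
    _ = (ga s c)^(-i) * (g s c (j - i) * gb s c) * (ga s c)^i := by rw [comm_b_g]
    _ = ((ga s c) ^ (-i) * g s c (j - i) * (ga s c) ^ i) * ((ga s c)^(-i) * gb s c * (ga s c)^i) := by
        group
    _ = g s c j * g s c i := by rw [← hgj]; rfl

lemma g_zero : g s c 0 = gb s c := by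
  rw [g]; simp

lemma relQ2 (k : ℤ) :
    ((List.finRange (s + 1)).map fun i : Fin (s + 1) => (g s c (k + (i : ℤ))) ^ (c i)).prod = 1 := by
  have h0 := mk_rel_eq_one s c (Or.inr rfl)
  rw [map_list_prod, List.map_map] at h0
  have h1 := congrArg (⇑(MulAut.conj ((ga s c) ^ (-k)))) h0
  rw [map_one, map_list_prod, List.map_map] at h1
  rw [← h1]
  congr 1
  refine List.map_congr_left fun a _ => ?_
  simp only [Function.comp_apply]
  have hmk : ∀ (i m : ℤ), (PresentedGroup.mk (gcRels s c))
      ((FreeGroup.of (0 : Fin 2) ^ (-i) * FreeGroup.of (1 : Fin 2) * FreeGroup.of (0 : Fin 2) ^ i) ^ m)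
      = g s c i ^ m := fun i m => by rw [map_zpow, mk_word]
  have hconj : ∀ x : GcGroup s c, MulAut.conj ((ga s c) ^ (-k)) x = (ga s c)^(-k) * x * (ga s c)^k := by
    intro x
    rw [MulAut.conj_apply]
    congr 1
    rw [← zpow_neg, neg_neg]
  rw [hmk, map_zpow, hconj, conj_g, add_comm]

noncomputable def Jc : Subgroup (GcGroup s c) := Subgroup.closure (Set.range (g s c))

lemma g_mem (i : ℤ) : g s c i ∈ Jc s c := Subgroup.subset_closure ⟨i, rfl⟩

lemma conj_mem (t : ℤ) : ∀ x ∈ Jc s c, (ga s c) ^ t * x * (ga s c) ^ (-t) ∈ Jc s c := by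
  intro x hx
  induction hx using Subgroup.closure_induction with
  | mem y hy =>
    obtain ⟨i, rfl⟩ := hy
    have h := conj_g s c (-t) i
    rw [neg_neg] at h
    rw [h]
    exact g_mem s c _
  | one => simpa using one_mem _
  | mul y z _ _ hy hz =>
    have : (ga s c) ^ t * (y * z) * (ga s c) ^ (-t)
        = ((ga s c) ^ t * y * (ga s c) ^ (-t)) * ((ga s c) ^ t * z * (ga s c) ^ (-t)) := by group
    rw [this]; exact mul_mem hy hz
  | inv y _ hy =>
    have : (ga s c) ^ t * y⁻¹ * (ga s c) ^ (-t) = ((ga s c) ^ t * y * (ga s c) ^ (-t))⁻¹ := by group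
    rw [this]; exact inv_mem hy

lemma conjb_mem : ∀ x ∈ Jc s c, ∀ t : ℤ, (gb s c) ^ t * x * (gb s c) ^ (-t) ∈ Jc s c := by
  intro x hx
  induction hx using Subgroup.closure_induction with
  | mem y hy =>
    intro t
    obtain ⟨i, rfl⟩ := hy
    have hb : gb s c = g s c 0 := (g_zero s c).symm
    have hcomm : Commute (gb s c) (g s c i) := comm_b_g s c i
    have : (gb s c) ^ t * g s c i * (gb s c) ^ (-t) = g s c i := by
      rw [(hcomm.zpow_left t).eq, zpow_neg, mul_assoc, mul_inv_cancel, mul_one]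
    rw [this]
    exact g_mem s c i
  | one => intro t; simpa using one_mem _
  | mul y z _ _ hy hz =>
    intro t
    have : (gb s c) ^ t * (y * z) * (gb s c) ^ (-t)
        = ((gb s c) ^ t * y * (gb s c) ^ (-t)) * ((gb s c) ^ t * z * (gb s c) ^ (-t)) := by group
    rw [this]; exact mul_mem (hy t) (hz t)
  | inv y _ hy =>
    intro t
    have : (gb s c) ^ t * y⁻¹ * (gb s c) ^ (-t) = ((gb s c) ^ t * y * (gb s c) ^ (-t))⁻¹ := by group
    rw [this]; exact inv_mem (hy t)

lemma mem_normalizer_aux {x : GcGroup s c}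
    (h1 : ∀ y ∈ Jc s c, x * y * x⁻¹ ∈ Jc s c) (h2 : ∀ y ∈ Jc s c, x⁻¹ * y * x ∈ Jc s c) :
    x ∈ Subgroup.normalizer (Jc s c : Set (GcGroup s c)) := by
  rw [Subgroup.mem_normalizer_iff]
  intro h
  constructor
  · exact h1 h
  · intro hh
    have := h2 _ hh
    rwa [show x⁻¹ * (x * h * x⁻¹) * x = h by group] at this

lemma Jc_normal : (Jc s c).Normal := by
  rw [← Subgroup.normalizer_eq_top_iff, eq_top_iff, ← PresentedGroup.closure_range_of (gcRels s c),
    Subgroup.closure_le]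
  rintro x ⟨i, rfl⟩
  fin_cases i
  · refine mem_normalizer_aux s c (fun y hy => ?_) (fun y hy => ?_)
    · have := conj_mem s c 1 y hy
      simpa [zpow_one, ga] using this
    · have := conj_mem s c (-1) y hy
      simpa [zpow_one, zpow_neg, ga] using this
  · refine mem_normalizer_aux s c (fun y hy => ?_) (fun y hy => ?_)
    · have := conjb_mem s c y hy 1
      simpa [zpow_one, gb] using this
    · have := conjb_mem s c y hy (-1)
      simpa [zpow_one, zpow_neg, gb] using this

lemma pi_ga : pi s c (ga s c) = inr (ofAdd (1 : ℤ)) := by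
  rw [ga, pi, PresentedGroup.toGroup.of]
  rfl

lemma pi_gb : pi s c (gb s c) = inl (ofAdd (mkA s c (Finsupp.single 0 1))) := by
  rw [gb, pi, PresentedGroup.toGroup.of]
  rfl

lemma pi_g (i : ℤ) : pi s c (g s c i) = inl (ofAdd (mkA s c (Finsupp.single i 1))) := by
  rw [g, map_mul, map_mul, map_zpow, map_zpow, pi_ga, pi_gb, conj_inl, shiftF_single]
  norm_num

/-- The projection onto the `⟨α⟩`-part. -/
noncomputable def rho : GcGroup s c →* Multiplicative ℤ :=
  (rightHom : SG s c →* Multiplicative ℤ).comp (pi s c)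

lemma rho_ga_zpow (n : ℤ) : rho s c ((ga s c) ^ n) = ofAdd n := by
  rw [rho, MonoidHom.comp_apply, map_zpow, pi_ga, map_zpow, rightHom_inr, ofAdd_one_zpow]

lemma Jc_le_ker : Jc s c ≤ (rho s c).ker := by
  rw [Jc, Subgroup.closure_le]
  rintro x ⟨i, rfl⟩
  simp only [SetLike.mem_coe, MonoidHom.mem_ker, rho, MonoidHom.comp_apply, pi_g, rightHom_inl]

lemma pi_right_eq_one {x : GcGroup s c} (hx : x ∈ Jc s c) : (pi s c x).right = 1 :=
  Jc_le_ker s c hx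

lemma comm_S : ∀ x ∈ Set.range (g s c), ∀ y ∈ Set.range (g s c), x * y = y * x := by
  rintro _ ⟨i, rfl⟩ _ ⟨j, rfl⟩
  exact comm_g s c i j

noncomputable def instCG : CommGroup ↥(Jc s c) := Subgroup.closureCommGroupOfComm (comm_S s c)

section CommPart

attribute [local instance] instCG

noncomputable def gJ (k : ℤ) : ↥(Jc s c) := ⟨g s c k, g_mem s c k⟩

noncomputable def F0 : (ℤ →₀ ℤ) →+ Additive ↥(Jc s c) :=
  Finsupp.liftAddHom fun k => zmultiplesHom _ (Additive.ofMul (gJ s c k))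

lemma F0_single (k m : ℤ) : F0 s c (Finsupp.single k m) = m • Additive.ofMul (gJ s c k) := by
  erw [F0, Finsupp.liftAddHom_apply_single]
  rfl

lemma relQ2' (k : ℤ) :
    ((List.finRange (s + 1)).map fun i : Fin (s + 1) => (g s c (k + ((i : ℕ) : ℤ))) ^ (c i)).prod
      = 1 := by
  have h := relQ2 s c k
  rw [← h]

lemma F0_relFun (k : ℤ) : F0 s c (relFun s c k) = 0 := by
  rw [relFun, map_sum]
  have h1 : ∀ i : Fin (s + 1), F0 s c (c i • Finsupp.single (k + (i : ℤ)) (1 : ℤ))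
      = c i • Additive.ofMul (gJ s c (k + (i : ℤ))) := by
    intro i
    rw [map_zsmul, F0_single, one_zsmul]
    rfl
  rw [Finset.sum_congr rfl fun i _ => h1 i]
  have : Additive.toMul (∑ i : Fin (s + 1), c i • Additive.ofMul (gJ s c (k + (i : ℤ))))
      = ∏ i : Fin (s + 1), gJ s c (k + (i : ℤ)) ^ (c i) := by
    rw [toMul_sum]
    exact Finset.prod_congr rfl fun i _ => by rw [toMul_zsmul, toMul_ofMul]
  have h2 : (∏ i : Fin (s + 1), gJ s c (k + (i : ℤ)) ^ (c i)) = 1 := by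
    apply Subtype.ext
    rw [Fin.prod_univ_def]
    have h3 := map_list_prod ((Jc s c).subtype)
      ((List.finRange (s + 1)).map fun i : Fin (s + 1) => gJ s c (k + (i : ℤ)) ^ (c i))
    rw [List.map_map] at h3
    refine h3.trans ?_
    have h4 : ((List.finRange (s + 1)).map
        (((Jc s c).subtype) ∘ fun i : Fin (s + 1) => gJ s c (k + (i : ℤ)) ^ (c i)))
        = (List.finRange (s + 1)).map fun i : Fin (s + 1) => (g s c (k + ((i : ℕ) : ℤ))) ^ (c i) := by
      refine List.map_congr_left fun a _ => ?_
      simp only [Function.comp_apply, map_zpow]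
      rfl
    rw [h4, relQ2']
    rfl
  calc (∑ i : Fin (s + 1), c i • Additive.ofMul (gJ s c (k + (i : ℤ))))
      = Additive.ofMul (Additive.toMul (∑ i : Fin (s + 1), c i • Additive.ofMul (gJ s c (k + (i : ℤ))))) := rfl
    _ = Additive.ofMul (1 : ↥(Jc s c)) := by rw [this, h2]
    _ = 0 := rfl

lemma R_le_ker : R s c ≤ (F0 s c).ker := by
  rw [R]
  rw [AddSubgroup.closure_le]
  rintro x ⟨k, rfl⟩
  exact F0_relFun s c k

noncomputable def F1 : A s c →+ Additive ↥(Jc s c) :=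
  QuotientAddGroup.lift (R s c) (F0 s c) (R_le_ker s c)

lemma F1_mkA (x : ℤ →₀ ℤ) : F1 s c (mkA s c x) = F0 s c x := rfl

noncomputable def Phi : Multiplicative (A s c) →* ↥(Jc s c) :=
  AddMonoidHom.toMultiplicativeLeft (F1 s c)

lemma Phi_apply (x : ℤ →₀ ℤ) :
    Phi s c (ofAdd (mkA s c x)) = Additive.toMul (F0 s c x) := rfl

lemma Phi_single (k : ℤ) : Phi s c (ofAdd (mkA s c (Finsupp.single k 1))) = gJ s c k := by
  rw [Phi_apply, F0_single, one_zsmul]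
  rfl

noncomputable def Psi : ↥(Jc s c) →* Multiplicative (A s c) where
  toFun j := (pi s c j.1).left
  map_one' := by simp
  map_mul' a b := by
    show (pi s c (↑a * ↑b)).left = _
    rw [map_mul, mul_left, pi_right_eq_one s c a.2, map_one, MulAut.one_apply]

lemma Psi_gJ (k : ℤ) : Psi s c (gJ s c k) = ofAdd (mkA s c (Finsupp.single k 1)) := by
  show (pi s c (g s c k)).left = _
  rw [pi_g]
  rfl

lemma ofAdd_single (k b : ℤ) :
    ofAdd (mkA s c (Finsupp.single k b)) = (ofAdd (mkA s c (Finsupp.single k 1))) ^ b := by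
  rw [← ofAdd_zsmul, ← map_zsmul (mkA s c), Finsupp.smul_single, smul_eq_mul, mul_one]

lemma Phi_single_gen (k b : ℤ) :
    Phi s c (ofAdd (mkA s c (Finsupp.single k b))) = gJ s c k ^ b := by
  rw [ofAdd_single, map_zpow, Phi_single]
  rfl

lemma Psi_Phi : ∀ a : Multiplicative (A s c), Psi s c (Phi s c a) = a := by
  intro a
  induction a using QuotientAddGroup.induction_on with
  | H x =>
  show Psi s c (Phi s c (ofAdd (mkA s c x))) = ofAdd (mkA s c x)
  induction x using Finsupp.induction with
  | zero => simp
  | single_add k b f _ _ ih =>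
    have hsplit : ofAdd (mkA s c (Finsupp.single k b + f))
        = ofAdd (mkA s c (Finsupp.single k b)) * ofAdd (mkA s c f) := by
      rw [map_add, ofAdd_add]
    rw [hsplit, map_mul, map_mul, ih, Phi_single_gen, map_zpow, Psi_gJ, ofAdd_single s c k b]

lemma Phi_Psi : ∀ j : ↥(Jc s c), Phi s c (Psi s c j) = j := by
  rintro ⟨x, hx⟩
  induction hx using Subgroup.closure_induction with
  | mem y hy =>
    obtain ⟨k, rfl⟩ := hy
    show Phi s c (Psi s c (gJ s c k)) = gJ s c k
    rw [Psi_gJ, Phi_single]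
  | one =>
    show Phi s c (Psi s c 1) = 1
    rw [map_one, map_one]
  | mul y z hy hz ihy ihz =>
    show Phi s c (Psi s c (⟨y, hy⟩ * ⟨z, hz⟩)) = ⟨y, hy⟩ * ⟨z, hz⟩
    rw [map_mul, map_mul, ihy, ihz]
  | inv y hy ihy =>
    show Phi s c (Psi s c (⟨y, hy⟩⁻¹)) = ⟨y, hy⟩⁻¹
    rw [map_inv, map_inv, ihy]
    rfl

noncomputable def isoJA : ↥(Jc s c) ≃* Multiplicative (A s c) where
  toFun := Psi s c
  invFun := Phi s c
  left_inv := Phi_Psi s c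
  right_inv := Psi_Phi s c
  map_mul' := (Psi s c).map_mul

end CommPart

end GcAux

open scoped Pointwise in
/-- **Lemma.** Let `G = G(c)` be a Gc-group with generators `α, β`, and let
`J = ⟨β^(α^i) : i ∈ ℤ⟩`. Then `G` is the internal semidirect product `J ⋊ ⟨α⟩`
(`J` is normal, `J ∩ ⟨α⟩ = 1` and `J⬝⟨α⟩ = G`), and `J` is isomorphic to the abelian group
presented, as an abelian group, by generators `β_i (i ∈ ℤ)` subject to the relations
`∑_{i=0}^{s} c_i β_{k+i} = 0` for all `k ∈ ℤ`. -/
theorem gcGroup_semidirect (s : ℕ) (c : Fin (s + 1) → ℤ) (hc : IsGcVec s c)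
    (α β : GcGroup s c) (hα : α = PresentedGroup.of 0) (hβ : β = PresentedGroup.of 1)
    (J : Subgroup (GcGroup s c))
    (hJ : J = Subgroup.closure (Set.range fun i : ℤ => α ^ (-i) * β * α ^ i)) :
    J.Normal ∧
    J ⊓ Subgroup.zpowers α = ⊥ ∧
    (J : Set (GcGroup s c)) * (Subgroup.zpowers α : Set (GcGroup s c)) = Set.univ ∧
    Nonempty (J ≃* Multiplicative ((ℤ →₀ ℤ) ⧸
      AddSubgroup.closure (Set.range fun k : ℤ =>
        ∑ i : Fin (s + 1), c i • Finsupp.single (k + (i : ℤ)) (1 : ℤ)))) := by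
  subst hα hβ
  have hJc : J = GcAux.Jc s c := hJ
  subst hJc
  haveI hN : (GcAux.Jc s c).Normal := GcAux.Jc_normal s c
  refine ⟨hN, ?_, ?_, ?_⟩
  · rw [eq_bot_iff]
    intro x hx
    rw [Subgroup.mem_inf] at hx
    obtain ⟨h1, h2⟩ := hx
    rw [Subgroup.mem_zpowers_iff] at h2
    obtain ⟨n, rfl⟩ := h2
    have h3 := GcAux.Jc_le_ker s c h1
    rw [MonoidHom.mem_ker] at h3
    have h4 : Multiplicative.ofAdd n = (1 : Multiplicative ℤ) := by
      rw [← GcAux.rho_ga_zpow s c n]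
      exact h3
    have h5 : n = 0 := by
      have := congrArg Multiplicative.toAdd h4
      simpa using this
    rw [h5, zpow_zero]
    exact Subgroup.mem_bot.mpr rfl
  · have hsup : GcAux.Jc s c ⊔ Subgroup.zpowers (PresentedGroup.of 0 : GcGroup s c) = ⊤ := by
      rw [eq_top_iff]
      intro x _
      refine PresentedGroup.generated_by (gcRels s c) _ (fun j => ?_) x
      fin_cases j
      · exact Subgroup.mem_sup_right (Subgroup.mem_zpowers _)
      · refine Subgroup.mem_sup_left ?_
        have := GcAux.g_mem s c 0
        rwa [GcAux.g_zero] at this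
    rw [← Subgroup.normal_mul, hsup, Subgroup.coe_top]
  · exact ⟨GcAux.isoJA s c⟩
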